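/- Let a_1,…,a_n be positive integers with A = Σ_{i=1}^n a_i. Consider the warehouse instance with T = n+1 periods, initial stock s_0 = A, stock bounds 0 ≤ s_t ≤ 2A for all t, purchase and sale bounds 0 ≤ x_t ≤ a_t and 0 ≤ y_t ≤ a_t for t = 1,…,n, x_{n+1} = 0 and 0 ≤ y_{n+1} ≤ A, balance equations s_t = s_{t−1} − y_t + x_t, and complementarity constraints x_t·y_t = 0. Then every feasible point (x, y, s) of this instance satisfies Σ_{t=1}^{n+1} y_t ≤ 3A/2. -/

import Mathlib

noncomputable section

/-- Feasibility for the warehouse instance built from positive integers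
`a_1,…,a_n` in the reduction from the partition problem: `T = n+1` periods,
initial stock `A = a_1 + ⋯ + a_n`, stock bounds `[0, 2A]`, purchase and sale
bounds `a_t` for `t ≤ n`, no purchases and sale bound `A` in period `n+1`,
balance equations and complementarity constraints. -/
def PartitionFeasible (n : ℕ) (a : ℕ → ℕ) (x y s : ℕ → ℝ) : Prop :=
  s 0 = (∑ i ∈ Finset.Icc 1 n, (a i : ℝ)) ∧
  (∀ t, 1 ≤ t → t ≤ n + 1 →
    s t = s (t - 1) - y t + x t ∧
    x t * y t = 0 ∧
    0 ≤ s t ∧ s t ≤ 2 * ∑ i ∈ Finset.Icc 1 n, (a i : ℝ)) ∧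
  (∀ t, 1 ≤ t → t ≤ n →
    0 ≤ x t ∧ x t ≤ (a t : ℝ) ∧ 0 ≤ y t ∧ y t ≤ (a t : ℝ)) ∧
  x (n + 1) = 0 ∧ 0 ≤ y (n + 1) ∧
  y (n + 1) ≤ ∑ i ∈ Finset.Icc 1 n, (a i : ℝ)

/-- **Lemma**: every feasible point of the partition-reduction instance has
total sales at most `3A/2`. -/
theorem partition_instance_sales_le
    (n : ℕ) (a : ℕ → ℕ) (hpos : ∀ i, 1 ≤ i → i ≤ n → 0 < a i)
    (x y s : ℕ → ℝ) (hfeas : PartitionFeasible n a x y s) :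
    ∑ t ∈ Finset.Icc 1 (n + 1), y t ≤
      3 * (∑ i ∈ Finset.Icc 1 n, (a i : ℝ)) / 2 := by
  obtain ⟨hs0, hbal, hbnd, hxn1, hyn1, hyn1A⟩ := hfeas
  set A : ℝ := ∑ i ∈ Finset.Icc 1 n, (a i : ℝ) with hA
  -- s t = A + ∑_{i=1}^t (x i - y i) for t ≤ n+1
  have key : ∀ t, t ≤ n + 1 → s t = A + ∑ i ∈ Finset.Icc 1 t, (x i - y i) := by
    intro t
    induction t with
    | zero => intro _; simp [hs0]
    | succ t ih =>
      intro ht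
      have ht' : t ≤ n + 1 := Nat.le_of_succ_le ht
      obtain ⟨hb, -, -, -⟩ := hbal (t + 1) (Nat.succ_le_succ (Nat.zero_le t)) ht
      have hsum : ∑ i ∈ Finset.Icc 1 (t + 1), (x i - y i)
          = (∑ i ∈ Finset.Icc 1 t, (x i - y i)) + (x (t + 1) - y (t + 1)) :=
        Finset.sum_Icc_succ_top (Nat.succ_le_succ (Nat.zero_le t)) _
      simp only [Nat.add_sub_cancel] at hb
      rw [hb, ih ht', hsum]
      ring
  have hsn : s n = A + ∑ i ∈ Finset.Icc 1 n, (x i - y i) := key n (Nat.le_succ n)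
  -- y (n+1) ≤ s n
  obtain ⟨hbN, -, hsN0, -⟩ := hbal (n + 1) (Nat.succ_le_succ (Nat.zero_le n)) le_rfl
  simp only [Nat.add_sub_cancel, hxn1] at hbN
  have hylesn : y (n + 1) ≤ s n := by linarith
  -- X + Y ≤ A
  have hXY : (∑ i ∈ Finset.Icc 1 n, x i) + (∑ i ∈ Finset.Icc 1 n, y i) ≤ A := by
    rw [← Finset.sum_add_distrib]
    apply Finset.sum_le_sum
    intro i hi
    rw [Finset.mem_Icc] at hi
    obtain ⟨hx0, hxa, hy0, hya⟩ := hbnd i hi.1 hi.2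
    obtain ⟨-, hcomp, -, -⟩ := hbal i hi.1 (Nat.le_succ_of_le hi.2)
    rcases mul_eq_zero.mp hcomp with h | h <;> rw [h] <;> linarith
  have hX0 : 0 ≤ ∑ i ∈ Finset.Icc 1 n, x i :=
    Finset.sum_nonneg fun i hi => (hbnd i (Finset.mem_Icc.mp hi).1 (Finset.mem_Icc.mp hi).2).1
  have hY0 : 0 ≤ ∑ i ∈ Finset.Icc 1 n, y i :=
    Finset.sum_nonneg fun i hi => (hbnd i (Finset.mem_Icc.mp hi).1 (Finset.mem_Icc.mp hi).2).2.2.1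
  have hsplit : ∑ t ∈ Finset.Icc 1 (n + 1), y t
      = (∑ t ∈ Finset.Icc 1 n, y t) + y (n + 1) :=
    Finset.sum_Icc_succ_top (Nat.succ_le_succ (Nat.zero_le n)) _
  have hsub : ∑ i ∈ Finset.Icc 1 n, (x i - y i)
      = (∑ i ∈ Finset.Icc 1 n, x i) - ∑ i ∈ Finset.Icc 1 n, y i :=
    Finset.sum_sub_distrib _ _
  rw [hsplit]
  rcases le_total (∑ i ∈ Finset.Icc 1 n, y i) (∑ i ∈ Finset.Icc 1 n, x i) with h | h
  · linarith
  · rw [hsub] at hsn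
    linarith
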